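/- Let A¹ = (a_{ij}) and A² = (b_{ij}) be symmetric real 2×2 matrices. In the octonions 𝕆, for (t₁, t₂) ∈ ℝ² define E₁ = 𝐞 + (t₁/2)·𝐢·((a₁₂ − b₁₁)𝐣 + (a₁₁ + b₁₂)𝐤) + (t₂/2)·𝐢·((−a₁₁ − b₁₂)𝐣 + (a₁₂ − b₁₁)𝐤), E₂ = 𝐢𝐞 + (t₁/2)·𝐢·((a₂₂ − b₁₂)𝐣 + (a₁₂ + b₂₂)𝐤) + (t₂/2)·𝐢·((−a₁₂ − b₂₂)𝐣 + (a₂₂ − b₁₂)𝐤), F₁ = 𝟏, F₂ = 𝐢 (all products octonionic). Then the imaginary part of the octonion Ē₁·(E₂·(F̄₁·F₂)) vanishes for every (t₁, t₂) ∈ ℝ² if and only if trace A¹ = a₁₁ + a₂₂ = 0 and trace A² = b₁₁ + b₂₂ = 0. (This is the pointwise statement that the total space of the rank 2 eigenbundle V₊ⱼ of the negative spinor bundle S⁻(ℝ⁴) restricted to a surface M² ⊂ ℝ⁴ is a Cayley submanifold of ℝ⁸ if and only if the immersion M² ⊂ ℝ⁴ is minimal.) -/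

import Mathlib

noncomputable section

/-- The octonions as pairs of quaternions, `𝕆 = ℍ × ℍ`. -/
abbrev Octo := Quaternion ℝ × Quaternion ℝ

/-- Cayley–Dickson multiplication `(a,b)·(c,d) = (ac − d̄b, da + bc̄)`. -/
def omul (x y : Octo) : Octo :=
  (x.1 * y.1 - star y.2 * x.2, y.2 * x.1 + x.2 * star y.1)

/-- Octonion conjugation `(a,b)‾ = (ā, −b)`. -/
def oconj (x : Octo) : Octo := (star x.1, -x.2)

/-- Imaginary part `Im x = (x − x̄)/2`. -/
def oim (x : Octo) : Octo := (2⁻¹ : ℝ) • (x - oconj x)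

def o1 : Octo := (1, 0)
def oI : Octo := (⟨0, 1, 0, 0⟩, 0)
def oJ : Octo := (⟨0, 0, 1, 0⟩, 0)
def oK : Octo := (⟨0, 0, 0, 1⟩, 0)
def oE : Octo := (0, 1)
def oIE : Octo := (0, ⟨0, 1, 0, 0⟩)

/-- `E₁ = 𝐞 + (t₁/2)𝐢((a₁₂ − b₁₁)𝐣 + (a₁₁ + b₁₂)𝐤) + (t₂/2)𝐢((−a₁₁ − b₁₂)𝐣 + (a₁₂ − b₁₁)𝐤)`. -/
def cayE1 (A1 A2 : Matrix (Fin 2) (Fin 2) ℝ) (t1 t2 : ℝ) : Octo :=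
  oE + (t1 / 2) • omul oI ((A1 0 1 - A2 0 0) • oJ + (A1 0 0 + A2 0 1) • oK)
     + (t2 / 2) • omul oI ((-(A1 0 0) - A2 0 1) • oJ + (A1 0 1 - A2 0 0) • oK)

/-- `E₂ = 𝐢𝐞 + (t₁/2)𝐢((a₂₂ − b₁₂)𝐣 + (a₁₂ + b₂₂)𝐤) + (t₂/2)𝐢((−a₁₂ − b₂₂)𝐣 + (a₂₂ − b₁₂)𝐤)`. -/
def cayE2 (A1 A2 : Matrix (Fin 2) (Fin 2) ℝ) (t1 t2 : ℝ) : Octo :=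
  oIE + (t1 / 2) • omul oI ((A1 1 1 - A2 0 1) • oJ + (A1 0 1 + A2 1 1) • oK)
      + (t2 / 2) • omul oI ((-(A1 0 1) - A2 1 1) • oJ + (A1 1 1 - A2 0 1) • oK)

lemma o1_comps : o1.1.re = 1 ∧ o1.1.imI = 0 ∧ o1.1.imJ = 0 ∧ o1.1.imK = 0 ∧ o1.2.re = 0 ∧ o1.2.imI = 0 ∧ o1.2.imJ = 0 ∧ o1.2.imK = 0 :=
  ⟨rfl, rfl, rfl, rfl, rfl, rfl, rfl, rfl⟩

lemma oI_comps : oI.1.re = 0 ∧ oI.1.imI = 1 ∧ oI.1.imJ = 0 ∧ oI.1.imK = 0 ∧ oI.2.re = 0 ∧ oI.2.imI = 0 ∧ oI.2.imJ = 0 ∧ oI.2.imK = 0 :=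
  ⟨rfl, rfl, rfl, rfl, rfl, rfl, rfl, rfl⟩

lemma oJ_comps : oJ.1.re = 0 ∧ oJ.1.imI = 0 ∧ oJ.1.imJ = 1 ∧ oJ.1.imK = 0 ∧ oJ.2.re = 0 ∧ oJ.2.imI = 0 ∧ oJ.2.imJ = 0 ∧ oJ.2.imK = 0 :=
  ⟨rfl, rfl, rfl, rfl, rfl, rfl, rfl, rfl⟩

lemma oK_comps : oK.1.re = 0 ∧ oK.1.imI = 0 ∧ oK.1.imJ = 0 ∧ oK.1.imK = 1 ∧ oK.2.re = 0 ∧ oK.2.imI = 0 ∧ oK.2.imJ = 0 ∧ oK.2.imK = 0 :=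
  ⟨rfl, rfl, rfl, rfl, rfl, rfl, rfl, rfl⟩

lemma oE_comps : oE.1.re = 0 ∧ oE.1.imI = 0 ∧ oE.1.imJ = 0 ∧ oE.1.imK = 0 ∧ oE.2.re = 1 ∧ oE.2.imI = 0 ∧ oE.2.imJ = 0 ∧ oE.2.imK = 0 :=
  ⟨rfl, rfl, rfl, rfl, rfl, rfl, rfl, rfl⟩

lemma oIE_comps : oIE.1.re = 0 ∧ oIE.1.imI = 0 ∧ oIE.1.imJ = 0 ∧ oIE.1.imK = 0 ∧ oIE.2.re = 0 ∧ oIE.2.imI = 1 ∧ oIE.2.imJ = 0 ∧ oIE.2.imK = 0 :=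
  ⟨rfl, rfl, rfl, rfl, rfl, rfl, rfl, rfl⟩

set_option maxHeartbeats 2000000 in
lemma key (A1 A2 : Matrix (Fin 2) (Fin 2) ℝ) (t1 t2 : ℝ) :
    oim (omul (oconj (cayE1 A1 A2 t1 t2))
      (omul (cayE2 A1 A2 t1 t2) (omul (oconj o1) oI))) =
    ((⟨0, (A1 0 0 * A1 0 1 + A1 0 1 * A1 1 1 + A2 0 0 * A2 0 1 + A2 0 1 * A2 1 1
        + A1 0 0 * A2 1 1 - A1 1 1 * A2 0 0) * (t1^2 + t2^2) / 4, 0, 0⟩ : Quaternion ℝ),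
     (⟨0, 0, (t1 * (A1 0 0 + A1 1 1) - t2 * (A2 0 0 + A2 1 1)) / 2,
        (t2 * (A1 0 0 + A1 1 1) + t1 * (A2 0 0 + A2 1 1)) / 2⟩ : Quaternion ℝ)) := by
  simp only [oim, oconj, omul, cayE1, cayE2]
  ext <;>
  · simp only [Prod.fst_add, Prod.snd_add, Prod.smul_fst, Prod.smul_snd, Prod.fst_sub,
      Prod.snd_sub, Prod.fst_neg, Prod.snd_neg,
      Quaternion.re_mul, Quaternion.imI_mul, Quaternion.imJ_mul, Quaternion.imK_mul,
      Quaternion.re_star, Quaternion.imI_star, Quaternion.imJ_star, Quaternion.imK_star,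
      Quaternion.re_add, Quaternion.imI_add, Quaternion.imJ_add, Quaternion.imK_add,
      Quaternion.re_sub, Quaternion.imI_sub, Quaternion.imJ_sub, Quaternion.imK_sub,
      Quaternion.re_neg, Quaternion.imI_neg, Quaternion.imJ_neg, Quaternion.imK_neg,
      Quaternion.re_smul, Quaternion.imI_smul, Quaternion.imJ_smul, Quaternion.imK_smul,
      Quaternion.re_zero, Quaternion.imI_zero, Quaternion.imJ_zero, Quaternion.imK_zero,
      Quaternion.re_one, Quaternion.imI_one, Quaternion.imJ_one, Quaternion.imK_one,
      smul_eq_mul, o1_comps, oI_comps, oJ_comps, oK_comps, oE_comps, oIE_comps]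
    ring

/-- the pointwise Cayley criterion for the eigenbundle `V₊ⱼ` of the
negative spinor bundle over a surface `M² ⊂ ℝ⁴`: the imaginary part of the
four-fold product `Ē₁(E₂(F̄₁F₂))` vanishes for all `(t₁,t₂)` iff `A¹` and `A²`
are traceless, i.e. iff the surface is minimal. -/
theorem stmt11 (A1 A2 : Matrix (Fin 2) (Fin 2) ℝ) (hA1 : A1.IsSymm) (hA2 : A2.IsSymm) :
    (∀ t1 t2 : ℝ,
      oim (omul (oconj (cayE1 A1 A2 t1 t2))
        (omul (cayE2 A1 A2 t1 t2) (omul (oconj o1) oI))) = 0) ↔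
    (A1 0 0 + A1 1 1 = 0 ∧ A2 0 0 + A2 1 1 = 0) := by
  constructor
  · intro h
    have h1 := h 1 0
    rw [key] at h1
    have h2 := congrArg (fun x : Octo => x.2.imJ) h1
    have h3 := congrArg (fun x : Octo => x.2.imK) h1
    simp [Quaternion.imJ_zero, Quaternion.imK_zero] at h2 h3
    exact ⟨by linarith, by linarith⟩
  · rintro ⟨ha, hb⟩ t1 t2
    have e1 : A1 1 1 = -A1 0 0 := by linarith
    have e2 : A2 1 1 = -A2 0 0 := by linarith
    rw [key, e1, e2]
    refine Prod.ext_iff.mpr ⟨?_, ?_⟩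
    all_goals apply Quaternion.ext <;>
      simp only [Prod.fst_zero, Prod.snd_zero, Quaternion.re_zero, Quaternion.imI_zero, Quaternion.imJ_zero,
        Quaternion.imK_zero] <;> ring
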